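/- arXiv:2311.13522 — 3 statements merged into one kernel-verified Lean document; each statement's English description precedes it below -/
import Mathlib

section
/- Let G be a finite group whose order is not divisible by 3, acting on a set Ω, such that only the identity fixes 3 or more points of Ω. Let τ be a permutation of Ω normalizing G (acting by conjugation as an automorphism of G) that cyclically permutes three distinct points P, Q, R of Ω. Then the setwise stabilizer in G of {P, Q, R} is trivial. -/
private lemma cyc3 {Ω : Type*} (G : Subgroup (Equiv.Perm Ω)) [Finite G]
    (hcard : ¬ (3 ∣ Nat.card G))
    (h3fix : ∀ g ∈ G, ∀ x y z : Ω, x ≠ y → y ≠ z → x ≠ z →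
      g x = x → g y = y → g z = z → g = 1)
    (P Q R : Ω) (hPQ : P ≠ Q) (hQR : Q ≠ R) (hPR : P ≠ R)
    (δ : Equiv.Perm Ω) (hδ : δ ∈ G)
    (hδP : δ P = R) (hδQ : δ Q = P) (hδR : δ R = Q) : False := by
  have h3 : δ ^ 3 = 1 :=
    h3fix (δ ^ 3) (pow_mem hδ 3) P Q R hPQ hQR hPR
      (by simp [pow_succ, Equiv.Perm.mul_apply, hδP, hδQ, hδR])
      (by simp [pow_succ, Equiv.Perm.mul_apply, hδP, hδQ, hδR])
      (by simp [pow_succ, Equiv.Perm.mul_apply, hδP, hδQ, hδR])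
  have hδ1 : δ ≠ 1 := by
    intro h
    subst h
    simp at hδP
    exact hPR hδP
  set g : G := ⟨δ, hδ⟩ with hg
  have hg3 : g ^ 3 = 1 := Subtype.ext (by simp [hg, h3])
  have hdvd : orderOf g ∣ 3 := orderOf_dvd_of_pow_eq_one hg3
  rcases (Nat.prime_three).eq_one_or_self_of_dvd _ hdvd with h1 | h3'
  · apply hδ1
    have := orderOf_eq_one_iff.mp h1
    exact congrArg Subtype.val this
  · exact hcard (h3' ▸ orderOf_dvd_natCard g)

theorem stmt_5 {Ω : Type*} (G : Subgroup (Equiv.Perm Ω)) [Finite G]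
    (hcard : ¬ (3 ∣ Nat.card G))
    (h3fix : ∀ g ∈ G, ∀ x y z : Ω, x ≠ y → y ≠ z → x ≠ z →
      g x = x → g y = y → g z = z → g = 1)
    (τ : Equiv.Perm Ω)
    (hnorm : ∀ g ∈ G, τ * g * τ⁻¹ ∈ G)
    (P Q R : Ω) (hPQ : P ≠ Q) (hQR : Q ≠ R) (hPR : P ≠ R)
    (hτP : τ P = Q) (hτQ : τ Q = R) (hτR : τ R = P) :
    ∀ γ ∈ G, (⇑γ) '' ({P, Q, R} : Set Ω) = {P, Q, R} → γ = 1 := by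
  intro γ hγ himg
  have hmem : ∀ x ∈ ({P, Q, R} : Set Ω), γ x ∈ ({P, Q, R} : Set Ω) := fun x hx =>
    himg ▸ Set.mem_image_of_mem _ hx
  have hP := hmem P (by simp)
  have hQ := hmem Q (by simp)
  have hR := hmem R (by simp)
  simp only [Set.mem_insert_iff, Set.mem_singleton_iff] at hP hQ hR
  have hinj := γ.injective
  have hτ'P : τ⁻¹ P = R := by rw [← hτR]; simp
  have hτ'Q : τ⁻¹ Q = P := by rw [← hτP]; simp
  have hτ'R : τ⁻¹ R = Q := by rw [← hτQ]; simp
  have key : ∀ δ ∈ G, δ P = R → δ Q = P → δ R = Q → False := fun δ hδ =>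
    cyc3 G hcard h3fix P Q R hPQ hQR hPR δ hδ
  rcases hP with h1 | h1 | h1 <;> rcases hQ with h2 | h2 | h2 <;>
      rcases hR with h3 | h3 | h3 <;>
    try first
      | exact absurd (hinj (h1.trans h2.symm)) hPQ
      | exact absurd (hinj (h2.trans h3.symm)) hQR
      | exact absurd (hinj (h1.trans h3.symm)) hPR
  -- remaining 6 goals
  · -- identity
    exact h3fix γ hγ P Q R hPQ hQR hPR h1 h2 h3
  · -- fixes P, swaps Q R
    exact (key (τ * γ * τ⁻¹ * γ) (mul_mem (hnorm γ hγ) hγ)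
      (by simp [Equiv.Perm.mul_apply, h1, h2, h3, hτ'P, hτ'Q, hτ'R, hτP, hτQ, hτR])
      (by simp [Equiv.Perm.mul_apply, h1, h2, h3, hτ'P, hτ'Q, hτ'R, hτP, hτQ, hτR])
      (by simp [Equiv.Perm.mul_apply, h1, h2, h3, hτ'P, hτ'Q, hτ'R, hτP, hτQ, hτR])).elim
  · -- swaps P Q, fixes R
    exact (key (τ * γ * τ⁻¹ * γ) (mul_mem (hnorm γ hγ) hγ)
      (by simp [Equiv.Perm.mul_apply, h1, h2, h3, hτ'P, hτ'Q, hτ'R, hτP, hτQ, hτR])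
      (by simp [Equiv.Perm.mul_apply, h1, h2, h3, hτ'P, hτ'Q, hτ'R, hτP, hτQ, hτR])
      (by simp [Equiv.Perm.mul_apply, h1, h2, h3, hτ'P, hτ'Q, hτ'R, hτP, hτQ, hτR])).elim
  · -- 3-cycle P→Q→R→P : use γ⁻¹
    exact (key γ⁻¹ (inv_mem hγ)
      (by rw [← h3]; simp) (by rw [← h1]; simp) (by rw [← h2]; simp)).elim
  · -- 3-cycle P→R→Q→P : γ itself
    exact (key γ hγ h1 h2 h3).elim
  · -- swaps P R, fixes Q
    exact (key (τ * γ * τ⁻¹ * γ) (mul_mem (hnorm γ hγ) hγ)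
      (by simp [Equiv.Perm.mul_apply, h1, h2, h3, hτ'P, hτ'Q, hτ'R, hτP, hτQ, hτR])
      (by simp [Equiv.Perm.mul_apply, h1, h2, h3, hτ'P, hτ'Q, hτ'R, hτP, hτQ, hτR])
      (by simp [Equiv.Perm.mul_apply, h1, h2, h3, hτ'P, hτ'Q, hτ'R, hτP, hτQ, hτR])).elim
end

section
/- Let Γ be a thin incidence geometry over a finite type set I on which G = Aut(Γ) acts simply transitively on chambers. Fix a chamber c, and for each i ∈ I let γᵢ ∈ G be the unique element with γᵢ(c) the unique chamber i-adjacent to c. Then each γᵢ has order 2 and G = ⟨γᵢ : i ∈ I⟩, assuming the chamber graph of Γ is connected. -/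
theorem stmt_17 {G C I : Type*} [Group G] [MulAction G C]
    (adj : I → C → C → Prop)
    (hsymm : ∀ (i : I) (c d : C), adj i c d → adj i d c)
    (hGinv : ∀ (g : G) (i : I) (c d : C), adj i c d → adj i (g • c) (g • d))
    (hthin : ∀ (i : I) (c : C), ∃! d : C, d ≠ c ∧ adj i c d)
    (hreg : ∀ c d : C, ∃! g : G, g • c = d)
    (c : C)
    (hconn : ∀ d : C, Relation.ReflTransGen (fun x y : C => ∃ i, adj i x y) c d)
    (γ : I → G)
    (hγ : ∀ i : I, γ i • c ≠ c ∧ adj i c (γ i • c)) :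
    (∀ i : I, orderOf (γ i) = 2) ∧ Subgroup.closure (Set.range γ) = ⊤ := by
  have hsq : ∀ i : I, γ i * γ i = 1 := by
    intro i
    obtain ⟨hne, hadj⟩ := hγ i
    obtain ⟨x, _, hu⟩ := hthin i (γ i • c)
    have h1 : c = x := hu c ⟨fun h => hne h.symm, hsymm _ _ _ hadj⟩
    have h2 : γ i • (γ i • c) = x := by
      refine hu _ ⟨fun h => hne (smul_left_cancel (γ i) h), hGinv _ _ _ _ hadj⟩
    have h3 : (γ i * γ i) • c = c := by rw [mul_smul, h2, h1]
    obtain ⟨u, -, hu2⟩ := hreg c c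
    rw [hu2 _ h3, hu2 1 (one_smul _ _)]
  constructor
  · intro i
    refine orderOf_eq_prime ?_ ?_
    · rw [pow_two]; exact hsq i
    · intro h; exact (hγ i).1 (by rw [h, one_smul])
  · rw [eq_top_iff]
    intro g _
    have key : ∀ d : C, ∃ h ∈ Subgroup.closure (Set.range γ), h • c = d := by
      intro d
      induction hconn d with
      | refl => exact ⟨1, Subgroup.one_mem _, one_smul _ _⟩
      | @tail b e hcb hstep ih =>
        obtain ⟨h, hH, hhc⟩ := ih
        obtain ⟨i, hadj⟩ := hstep
        by_cases heb : e = b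
        · exact ⟨h, hH, heb ▸ hhc⟩
        · obtain ⟨x, -, hu⟩ := hthin i b
          have h1 : h • (γ i • c) = x := by
            refine hu _ ⟨?_, ?_⟩
            · rw [← hhc]
              exact fun hh => (hγ i).1 (smul_left_cancel h hh)
            · have := hGinv h i c (γ i • c) (hγ i).2
              rwa [hhc] at this
          have h2 : e = x := hu _ ⟨heb, hadj⟩
          refine ⟨h * γ i, mul_mem hH (Subgroup.subset_closure ⟨i, rfl⟩), ?_⟩
          rw [mul_smul, h1, ← h2]
    obtain ⟨h, hH, hhc⟩ := key (g • c)
    obtain ⟨u, -, hu2⟩ := hreg c (g • c)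
    rw [hu2 g rfl, ← hu2 h hhc]
    exact hH
end

section
/- Let G act regularly (simply transitively) on the vertex set of a connected graph X, with edges colored by a set I, such that G preserves adjacency up to a permutation action on colors. If α is a color-permuting automorphism of X, then the map sending the edge-generator γᵢ to γ_{α(i)} extends to a group automorphism Φ_α of G. -/
theorem stmt_18 {G I : Type*} [Group G] (γ : I → G)
    (hinv : ∀ i, γ i * γ i = 1)
    (hgen : Subgroup.closure (Set.range γ) = ⊤)
    (f : G ≃ G) (π : I ≃ I)
    (hf : ∀ (g : G) (i : I), f (g * γ i) = f g * γ (π i)) :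
    ∃ Φ : G ≃* G, ∀ i, Φ (γ i) = γ (π i) := by
  set c : G := (f 1)⁻¹ with hc
  have key : ∀ h : G, ∀ g : G, f (g * h) = f g * c * f h := by
    intro h
    have hmem : h ∈ Subgroup.closure (Set.range γ) := by rw [hgen]; trivial
    induction hmem using Subgroup.closure_induction with
    | mem x hx =>
      obtain ⟨i, rfl⟩ := hx
      intro g
      have h1 : f (1 * γ i) = f 1 * γ (π i) := hf 1 i
      rw [one_mul] at h1
      rw [hf g i, h1, hc]
      group
    | one => intro g; simp [hc]
    | mul h1 h2 _ _ ih1 ih2 =>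
      intro g
      have := ih2 (g * h1)
      rw [mul_assoc] at this
      rw [this, ih1 g, ih2 h1]
      group
    | inv h _ ih =>
      intro g
      have h0 : f 1 = f h⁻¹ * c * f h := by
        have := ih h⁻¹; rwa [inv_mul_cancel] at this
      have h1 : f g = f (g * h⁻¹) * c * f h := by
        have := ih (g * h⁻¹); rwa [mul_assoc, inv_mul_cancel, mul_one] at this
      have h2 : f (g * h⁻¹) = f g * (f h)⁻¹ * c⁻¹ := by
        rw [h1]; group
      have h3 : f h⁻¹ = f 1 * (f h)⁻¹ * c⁻¹ := by rw [h0]; group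
      rw [h2, h3, hc]
      group
  refine ⟨{ toEquiv := f.trans (Equiv.mulLeft c),
            map_mul' := by
              intro x y
              show c * f (x * y) = (c * f x) * (c * f y)
              rw [key y x]
              group }, ?_⟩
  intro i
  have h1 : f (1 * γ i) = f 1 * γ (π i) := hf 1 i
  rw [one_mul] at h1
  simp [h1, hc]
end
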